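/- For positive parameters D_u, D_v, β, k1, k2, q, c, if β > β* (with β* = (√q/(k1·√c))·(D_u·k2 + D_v·k1 + 2·D_v·√(c·q) + √(8·D_u·D_v·k2·√(c·q)))), then there exists λ > 0 such that Q0(λ) = A0·λ² + B0·λ + C0 < 0, where A0 = D_u·D_v, B0 = D_u·k2 + D_v·(2√(c·q) + k1) − β·√(c/q)·k1, and C0 = 2·k2·√(c·q). -/

import Mathlib

/-- For positive parameters, if `β > β*` then there exists `λ > 0` such that
`Q0(λ) = A0*λ² + B0*λ + C0 < 0`. -/
theorem momos_Q0_neg_of_beta_gt (Du Dv β k1 k2 q c : ℝ)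
    (hDu : 0 < Du) (hDv : 0 < Dv) (hβ : 0 < β) (hk1 : 0 < k1) (hk2 : 0 < k2)
    (hq : 0 < q) (hc : 0 < c)
    (hbeta : β > (Real.sqrt q / (k1 * Real.sqrt c)) *
      (Du * k2 + Dv * k1 + 2 * Dv * Real.sqrt (c * q)
        + Real.sqrt (8 * Du * Dv * k2 * Real.sqrt (c * q)))) :
    ∃ lam : ℝ, 0 < lam ∧
      (Du * Dv) * lam ^ 2
        + (Du * k2 + Dv * (2 * Real.sqrt (c * q) + k1) - β * Real.sqrt (c / q) * k1) * lam
        + 2 * k2 * Real.sqrt (c * q) < 0 := by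
  set S := Real.sqrt (c * q) with hSdef
  have hS : 0 < S := Real.sqrt_pos.2 (by positivity)
  set R := Real.sqrt (8 * Du * Dv * k2 * S) with hRdef
  have hR : 0 < R := Real.sqrt_pos.2 (by positivity)
  have hR2 : R ^ 2 = 8 * Du * Dv * k2 * S := Real.sq_sqrt (by positivity)
  have hsc : 0 < Real.sqrt c := Real.sqrt_pos.2 hc
  have hsq : 0 < Real.sqrt q := Real.sqrt_pos.2 hq
  have hcq : Real.sqrt (c / q) = Real.sqrt c / Real.sqrt q := Real.sqrt_div hc.le q
  have h1 : Real.sqrt q * (Du * k2 + Dv * k1 + 2 * Dv * S + R)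
      < β * (k1 * Real.sqrt c) := by
    have h := mul_lt_mul_of_pos_right hbeta.lt (show (0:ℝ) < k1 * Real.sqrt c by positivity)
    calc Real.sqrt q * (Du * k2 + Dv * k1 + 2 * Dv * S + R)
        = Real.sqrt q / (k1 * Real.sqrt c) * (Du * k2 + Dv * k1 + 2 * Dv * S + R)
          * (k1 * Real.sqrt c) := by field_simp
      _ < β * (k1 * Real.sqrt c) := h
  -- B < -R
  have hBneg : Du * k2 + Dv * (2 * S + k1) - β * Real.sqrt (c / q) * k1 < -R := by
    rw [hcq, ← mul_lt_mul_iff_of_pos_right hsq]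
    have hne : Real.sqrt q ≠ 0 := hsq.ne'
    have hexp : (Du * k2 + Dv * (2 * S + k1) - β * (Real.sqrt c / Real.sqrt q) * k1)
        * Real.sqrt q
        = (Du * k2 + Dv * (2 * S + k1)) * Real.sqrt q - β * (k1 * Real.sqrt c) := by
      field_simp
    rw [hexp]
    nlinarith [h1]
  set B := Du * k2 + Dv * (2 * S + k1) - β * Real.sqrt (c / q) * k1 with hBdef
  have hA : 0 < Du * Dv := by positivity
  have hlam : 0 < -B / (2 * (Du * Dv)) := by
    apply div_pos (by linarith) (by positivity)
  refine ⟨-B / (2 * (Du * Dv)), hlam, ?_⟩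
  have hkey : B ^ 2 > R ^ 2 := by nlinarith [hBneg, hR]
  have hval : (Du * Dv) * (-B / (2 * (Du * Dv))) ^ 2 + B * (-B / (2 * (Du * Dv)))
      + 2 * k2 * S = 2 * k2 * S - B ^ 2 / (4 * (Du * Dv)) := by
    field_simp
    ring
  rw [hval, sub_neg, lt_div_iff₀ (by positivity : (0:ℝ) < 4 * (Du * Dv))]
  nlinarith [hkey, hR2]
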